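/- Let P be a 1-differential poset, k and n positive integers with n ≥ 2, and let t_0 ⋖ t_1 ⋖ ⋯ and s_0 ⋖ s_1 ⋖ ⋯ be saturated chains as guaranteed for r = 1 (rank(t_m) = rank(s_m) = m, each covering at most one element, t_0 = s_0, t_1 = s_1, t_m ≠ s_m for m ≥ 2). Then (n−1)!_{1,k} · (n+1+k) is the smallest positive integer s such that s · v_{n,k} ∈ ℤP_n, where v_{n,k} := Σ_{j=0}^{n} (−1)^j U^j t_{n−j} / (j+1)!_{1,k} ∈ ℚP_n. -/

import Mathlib

open Matrix

variable {α : Type*}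

/-- The generalized factorial `ℓ!_{r,k} = (rℓ+k)(r(ℓ-1)+k)⋯(r·1+k)`. -/
def genFac (r k ℓ : ℕ) : ℕ := ∏ i ∈ Finset.range ℓ, (r * (i + 1) + k)

open Classical in
/-- The matrix of the up map `U_n : ℚP_n → ℚP_{n+1}`. -/
noncomputable def upMat [PartialOrder α] (rk : α → ℕ) (n : ℕ) :
    Matrix {x : α // rk x = n + 1} {x : α // rk x = n} ℚ :=
  Matrix.of fun z x => if x.1 ⋖ z.1 then 1 else 0

/-- The matrix of `DU_n := D_{n+1} U_n`. -/
noncomputable def duMat [PartialOrder α] (rk : α → ℕ)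
    [∀ n : ℕ, Fintype {x : α // rk x = n}] (n : ℕ) :
    Matrix {x : α // rk x = n} {x : α // rk x = n} ℚ :=
  (upMat rk n)ᵀ * upMat rk n

/-- `upIter rk m j v` is `U^j v` for `v ∈ ℚP_m`. -/
noncomputable def upIter [PartialOrder α] (rk : α → ℕ)
    [∀ n : ℕ, Fintype {x : α // rk x = n}] (m : ℕ) :
    (j : ℕ) → ({x : α // rk x = m} → ℚ) → ({x : α // rk x = m + j} → ℚ)
  | 0, v => v
  | j + 1, v => (upMat rk (m + j)).mulVec (upIter rk m j v)

/-- Transport a vector along an equality of ranks. -/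
noncomputable def rankCast [PartialOrder α] (rk : α → ℕ) (m n : ℕ)
    (v : {x : α // rk x = m} → ℚ) : {x : α // rk x = n} → ℚ :=
  fun x => if h : rk x.1 = m then v ⟨x.1, h⟩ else 0

open Classical in
/-- The standard basis vector of `y` in `ℚP_n`. -/
noncomputable def basisVec [PartialOrder α] (rk : α → ℕ) (n : ℕ) (y : α) :
    {x : α // rk x = n} → ℚ :=
  fun x => if x.1 = y then 1 else 0

/-- The vector `v_{n,k} := Σ_{j=0}^n (-1)^j U^j t_{n-j} / (j+1)!_{r,k}`. -/
noncomputable def vVec [PartialOrder α] (rk : α → ℕ)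
    [∀ n : ℕ, Fintype {x : α // rk x = n}] (t : ℕ → α) (r k n : ℕ) :
    {x : α // rk x = n} → ℚ :=
  ∑ j ∈ Finset.range (n + 1),
    ((-1 : ℚ) ^ j / (genFac r k (j + 1) : ℚ)) •
      rankCast rk ((n - j) + j) n (upIter rk (n - j) j (basisVec rk (n - j) (t (n - j))))

section Aux

variable [PartialOrder α] (rk : α → ℕ) [∀ n : ℕ, Fintype {x : α // rk x = n}]

open Classical in
/-- `ℕ`-valued count of saturated chains from `y` (of rank `m`) up `j` steps to `x`. -/
noncomputable def ccN (m : ℕ) (y : α) : ℕ → α → ℕ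
  | 0, x => if x = y then 1 else 0
  | j + 1, x => ∑ z : {z : α // rk z = m + j}, if z.1 ⋖ x then ccN m y j z.1 else 0

lemma sum_rank_congr {m m' : ℕ} (h : m = m') (f : α → ℕ) :
    ∑ z : {x : α // rk x = m}, f z.1 = ∑ z : {x : α // rk x = m'}, f z.1 := by
  subst h; rfl

lemma upIter_eq_ccN (m : ℕ) (y : α) :
    ∀ (j : ℕ) (x : {x : α // rk x = m + j}),
      upIter rk m j (basisVec rk m y) x = (ccN rk m y j x.1 : ℚ)
  | 0, x => by
      simp only [upIter, ccN, basisVec]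
      by_cases h : x.1 = y <;> simp [h]
  | j + 1, x => by
      simp only [upIter, ccN, Matrix.mulVec, dotProduct, upMat, Matrix.of_apply]
      push_cast
      refine Finset.sum_congr rfl fun z _ => ?_
      rw [upIter_eq_ccN m y j z]
      by_cases h : z.1 ⋖ x.1 <;> simp [h]

lemma vVec_eq_sum_ccN (t : ℕ → α) (k n : ℕ) (x : {x : α // rk x = n}) :
    vVec rk t 1 k n x =
      ∑ j ∈ Finset.range (n + 1),
        ((-1 : ℚ) ^ j / (genFac 1 k (j + 1) : ℚ)) * (ccN rk (n - j) (t (n - j)) j x.1 : ℚ) := by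
  unfold vVec
  rw [Finset.sum_apply]
  refine Finset.sum_congr rfl fun j hj => ?_
  have hj' : j ≤ n := by have := Finset.mem_range.mp hj; omega
  have hx : rk x.1 = (n - j) + j := by rw [x.2]; omega
  simp only [Pi.smul_apply, smul_eq_mul, rankCast, dif_pos hx]
  rw [upIter_eq_ccN rk (n - j) (t (n - j)) j ⟨x.1, hx⟩]

open Classical in
lemma ccN_saturated (hgrade : ∀ x y : α, x ⋖ y → rk y = rk x + 1)
    (s : ℕ → α) (hschain : ∀ m : ℕ, s m ⋖ s (m + 1))
    (hrks : ∀ m : ℕ, rk (s m) = m)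
    (hcovs : ∀ m : ℕ, {z : α | z ⋖ s m}.ncard ≤ 1)
    (m : ℕ) (y : α) :
    ∀ j : ℕ, ccN rk m y j (s (m + j)) = if s m = y then 1 else 0
  | 0 => by simp [ccN]
  | j + 1 => by
      have IH := ccN_saturated hgrade s hschain hrks hcovs m y j
      have hfin : ({z : α | z ⋖ s (m + j + 1)}).Finite := by
        refine (Set.finite_range (fun z : {x : α // rk x = m + j} => z.1)).subset ?_
        intro z hz
        have h1 := hgrade z _ hz
        have h2 := hrks (m + j + 1)
        exact ⟨⟨z, by omega⟩, rfl⟩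
      have huniq : ∀ z : α, z ⋖ s (m + j + 1) → z = s (m + j) := fun z hz =>
        (Set.ncard_le_one hfin).mp (hcovs (m + j + 1)) z hz (s (m + j)) (hschain (m + j))
      simp only [ccN]
      have hstep : ∀ z : {z : α // rk z = m + j},
          (if z.1 ⋖ s (m + j + 1) then ccN rk m y j z.1 else 0)
            = (if z = (⟨s (m + j), hrks (m + j)⟩ : {z : α // rk z = m + j})
                then ccN rk m y j z.1 else 0) := by
        intro z
        rcases eq_or_ne z (⟨s (m + j), hrks (m + j)⟩ : {z : α // rk z = m + j}) with h | h
        · rw [if_pos h, if_pos (by rw [h]; exact hschain (m + j))]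
        · rw [if_neg h, if_neg (fun hc => h (Subtype.ext (huniq z.1 hc)))]
      rw [show m + (j + 1) = m + j + 1 from rfl,
        Finset.sum_congr rfl fun z _ => hstep z,
        Finset.sum_ite_eq' Finset.univ (⟨s (m + j), hrks (m + j)⟩ : {z : α // rk z = m + j})]
      simpa using IH

lemma rank_zero_unique [OrderBot α]
    (hgrade : ∀ x y : α, x ⋖ y → rk y = rk x + 1)
    (hdown : ∀ x : α, x ≠ ⊥ → ∃ y : α, y ⋖ x) :
    ∀ x : α, rk x = 0 → x = ⊥ := by
  intro x hx
  by_contra h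
  obtain ⟨y, hy⟩ := hdown x h
  have := hgrade y x hy
  omega

lemma rank_one_unique [OrderBot α] (hbot : rk ⊥ = 0)
    (hgrade : ∀ x y : α, x ⋖ y → rk y = rk x + 1)
    (hdown : ∀ x : α, x ≠ ⊥ → ∃ y : α, y ⋖ x)
    (hD1 : ∀ x : α, {z : α | x ⋖ z}.ncard = {y : α | y ⋖ x}.ncard + 1)
    (w : α) (hw : (⊥ : α) ⋖ w) : ∀ x : α, rk x = 1 → x = w := by
  have hlow : {y : α | y ⋖ (⊥ : α)} = ∅ := by
    ext y
    simp only [Set.mem_setOf_eq, Set.mem_empty_iff_false, iff_false]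
    exact fun h => absurd h.1 (not_lt_bot)
  have h1 : {z : α | (⊥ : α) ⋖ z}.ncard = 1 := by
    rw [hD1 ⊥, hlow]; simp
  obtain ⟨a, ha⟩ := Set.ncard_eq_one.mp h1
  intro x hx
  have hxbot : x ≠ ⊥ := fun h => by rw [h, hbot] at hx; omega
  obtain ⟨y, hy⟩ := hdown x hxbot
  have hy0 : rk y = 0 := by have := hgrade y x hy; omega
  have hyb : y = ⊥ := rank_zero_unique rk hgrade hdown y hy0
  rw [hyb] at hy
  have hx' : x ∈ {z : α | (⊥ : α) ⋖ z} := hy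
  have hw' : w ∈ {z : α | (⊥ : α) ⋖ z} := hw
  rw [ha, Set.mem_singleton_iff] at hx' hw'
  rw [hx', hw']

open Classical in
lemma ccN_zero_one [OrderBot α] (hbot : rk ⊥ = 0)
    (hgrade : ∀ x y : α, x ⋖ y → rk y = rk x + 1)
    (hdown : ∀ x : α, x ≠ ⊥ → ∃ y : α, y ⋖ x)
    (hD1 : ∀ x : α, {z : α | x ⋖ z}.ncard = {y : α | y ⋖ x}.ncard + 1)
    (t : ℕ → α) (htchain : ∀ m : ℕ, t m ⋖ t (m + 1))
    (hrkt : ∀ m : ℕ, rk (t m) = m) :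
    ∀ (j : ℕ) (x : α), rk x = 1 + j →
      ccN rk 0 (t 0) (j + 1) x = ccN rk 1 (t 1) j x
  | 0, x, hx => by
      have ht0 : t 0 = ⊥ := rank_zero_unique rk hgrade hdown (t 0) (hrkt 0)
      have hbt1 : (⊥ : α) ⋖ t 1 := ht0 ▸ htchain 0
      have hx1 : x = t 1 :=
        rank_one_unique rk hbot hgrade hdown hD1 (t 1) hbt1 x (by omega)
      simp only [ccN]
      have hz : ∀ z : {z : α // rk z = 0 + 0}, z = (⟨t 0, hrkt 0⟩ : {z : α // rk z = 0 + 0}) := by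
        intro z
        exact Subtype.ext ((rank_zero_unique rk hgrade hdown z.1 z.2).trans ht0.symm)
      rw [Finset.sum_eq_single (⟨t 0, hrkt 0⟩ : {z : α // rk z = 0 + 0})
        (fun b _ hb => absurd (hz b) hb)
        (fun h => absurd (Finset.mem_univ _) h)]
      have hcov : t 0 ⋖ x := by rw [ht0, hx1]; exact hbt1
      rw [if_pos hcov, if_pos hx1]
      simp
  | j + 1, x, hx => by
      simp only [ccN]
      have key : ∀ z : α, rk z = 0 + (j + 1) →
          ccN rk 0 (t 0) (j + 1) z = ccN rk 1 (t 1) j z := fun z hz =>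
        ccN_zero_one hbot hgrade hdown hD1 t htchain hrkt j z (by omega)
      calc ∑ z : {z : α // rk z = 0 + (j + 1)},
            (if z.1 ⋖ x then ccN rk 0 (t 0) (j + 1) z.1 else 0)
          = ∑ z : {z : α // rk z = 0 + (j + 1)},
            (if z.1 ⋖ x then ccN rk 1 (t 1) j z.1 else 0) := by
            refine Finset.sum_congr rfl fun z _ => ?_
            rw [key z.1 z.2]
        _ = ∑ z : {z : α // rk z = 1 + j},
            (if z.1 ⋖ x then ccN rk 1 (t 1) j z.1 else 0) :=
            sum_rank_congr rk (show 0 + (j + 1) = 1 + j by omega)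
              (fun a => if a ⋖ x then ccN rk 1 (t 1) j a else 0)

end Aux

lemma genFac_succ' (r k ℓ : ℕ) : genFac r k (ℓ + 1) = genFac r k ℓ * (r * (ℓ + 1) + k) :=
  Finset.prod_range_succ _ _

lemma genFac_pos' (k ℓ : ℕ) : 0 < genFac 1 k ℓ :=
  Finset.prod_pos fun i _ => by omega

lemma genFac_dvd' (k : ℕ) {a b : ℕ} (h : a ≤ b) : genFac 1 k a ∣ genFac 1 k b :=
  Finset.prod_dvd_prod_of_subset _ _ _ (Finset.range_subset_range.mpr h)

lemma genFac_key (k p : ℕ) :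
    ((genFac 1 k (p + 1) * (p + 3 + k) : ℕ) : ℚ) *
      (1 / (genFac 1 k (p + 2) : ℚ) - 1 / (genFac 1 k (p + 3) : ℚ)) = 1 := by
  have h2 : genFac 1 k (p + 2) = genFac 1 k (p + 1) * (p + 2 + k) := by
    rw [genFac_succ', one_mul]
  have h3 : genFac 1 k (p + 3) = genFac 1 k (p + 1) * (p + 2 + k) * (p + 3 + k) := by
    rw [genFac_succ', one_mul, h2]
  have hp1 : (genFac 1 k (p + 1) : ℚ) ≠ 0 := by
    exact_mod_cast (genFac_pos' k (p + 1)).ne'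
  have hq2 : ((p : ℚ) + 2 + k) ≠ 0 := by positivity
  have hq3 : ((p : ℚ) + 3 + k) ≠ 0 := by positivity
  rw [h2, h3]
  push_cast
  field_simp
  ring
/-- For a `1`-differential poset, `(n-1)!_{1,k} · (n+1+k)` is the smallest positive
integer `s` such that `s · v_{n,k}` has integer coordinates. -/
theorem genFac_mul_isLeast_denominator_one_differential [PartialOrder α] [OrderBot α]
    (rk : α → ℕ) [∀ n : ℕ, Fintype {x : α // rk x = n}]
    (hbot : rk ⊥ = 0)
    (hgrade : ∀ x y : α, x ⋖ y → rk y = rk x + 1)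
    (hdown : ∀ x : α, x ≠ ⊥ → ∃ y : α, y ⋖ x)
    (hD1 : ∀ x : α, {z : α | x ⋖ z}.ncard = {y : α | y ⋖ x}.ncard + 1)
    (hD2 : ∀ x y : α, x ≠ y →
      {z : α | z ⋖ x ∧ z ⋖ y}.ncard = {z : α | x ⋖ z ∧ y ⋖ z}.ncard)
    (t : ℕ → α) (htchain : ∀ m : ℕ, t m ⋖ t (m + 1))
    (hrkt : ∀ m : ℕ, rk (t m) = m)
    (hcovt : ∀ m : ℕ, {z : α | z ⋖ t m}.ncard ≤ 1)
    (s : ℕ → α) (hschain : ∀ m : ℕ, s m ⋖ s (m + 1))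
    (hrks : ∀ m : ℕ, rk (s m) = m)
    (hcovs : ∀ m : ℕ, {z : α | z ⋖ s m}.ncard ≤ 1)
    (h0 : t 0 = s 0) (h1 : t 1 = s 1) (hne : ∀ m : ℕ, 2 ≤ m → t m ≠ s m)
    (k n : ℕ) (hk : 0 < k) (hn : 2 ≤ n) :
    IsLeast {c : ℕ | 0 < c ∧ ∀ x : {x : α // rk x = n},
        ∃ m : ℤ, (c : ℚ) * vVec rk t 1 k n x = (m : ℚ)}
      (genFac 1 k (n - 1) * (n + 1 + k)) := by
  obtain ⟨p, rfl⟩ : ∃ p, n = p + 2 := ⟨n - 2, by omega⟩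
  clear hn
  have hNpos : 0 < genFac 1 k (p + 1) * (p + 3 + k) :=
    Nat.mul_pos (genFac_pos' k (p + 1)) (by omega)
  have h2n : genFac 1 k (p + 2) = genFac 1 k (p + 1) * (p + 2 + k) := by
    rw [genFac_succ', one_mul]
  have h3n : genFac 1 k (p + 3) = genFac 1 k (p + 1) * (p + 2 + k) * (p + 3 + k) := by
    rw [genFac_succ', one_mul, h2n]
  have hGG : ((genFac 1 k (p + 1) : ℕ) : ℚ) ≠ 0 := by
    exact_mod_cast (genFac_pos' k (p + 1)).ne'
  have hx2 : ((p : ℚ) + 2 + k) ≠ 0 := by positivity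
  have hx3 : ((p : ℚ) + 3 + k) ≠ 0 := by positivity
  have hpow : ((-1 : ℚ)) ^ (p + 2) = -(-1 : ℚ) ^ (p + 1) := by
    rw [show p + 2 = (p + 1) + 1 from rfl, pow_succ]; ring
  have hqsq : ((-1 : ℚ)) ^ (p + 1) * ((-1 : ℚ)) ^ (p + 1) = 1 := by
    rw [← pow_add]; exact Even.neg_one_pow ⟨p + 1, by ring⟩
  constructor
  · -- membership
    refine ⟨hNpos, fun x => ?_⟩
    rw [vVec_eq_sum_ccN, Finset.sum_range_succ, Finset.sum_range_succ]
    have e2 : p + 2 - (p + 2) = 0 := by omega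
    have e1 : p + 2 - (p + 1) = 1 := by omega
    rw [e1, e2]
    have h30 : ccN rk 0 (t 0) (p + 2) x.1 = ccN rk 1 (t 1) (p + 1) x.1 :=
      ccN_zero_one rk hbot hgrade hdown hD1 t htchain hrkt (p + 1) x.1 (by rw [x.2]; omega)
    rw [h30]
    simp only [show p + 1 + 1 = p + 2 from rfl, show p + 2 + 1 = p + 3 from rfl,
      show p + 2 - 1 = p + 1 from rfl, show p + 2 + 1 + k = p + 3 + k from rfl]
    have hterm : ∀ j ∈ Finset.range (p + 1), ∃ m : ℤ,
        ((genFac 1 k (p + 1) * (p + 3 + k) : ℕ) : ℚ) *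
          ((-1 : ℚ) ^ j / (genFac 1 k (j + 1) : ℚ) *
            (ccN rk (p + 2 - j) (t (p + 2 - j)) j x.1 : ℚ)) = m := by
      intro j hj
      have hj' : j + 1 ≤ p + 1 := by have := Finset.mem_range.mp hj; omega
      obtain ⟨d, hd⟩ := genFac_dvd' k hj'
      refine ⟨(-1) ^ j * ((d * (p + 3 + k) * ccN rk (p + 2 - j) (t (p + 2 - j)) j x.1 : ℕ) : ℤ), ?_⟩
      have hgj : (genFac 1 k (j + 1) : ℚ) ≠ 0 := by
        exact_mod_cast (genFac_pos' k (j + 1)).ne'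
      rw [hd]
      push_cast
      field_simp
    choose F hF using hterm
    have hS : ((genFac 1 k (p + 1) * (p + 3 + k) : ℕ) : ℚ) *
        (∑ j ∈ Finset.range (p + 1), ((-1 : ℚ) ^ j / (genFac 1 k (j + 1) : ℚ) *
          (ccN rk (p + 2 - j) (t (p + 2 - j)) j x.1 : ℚ)))
        = ((∑ j ∈ (Finset.range (p + 1)).attach, F j.1 j.2 : ℤ) : ℚ) := by
      rw [Finset.mul_sum, ← Finset.sum_attach (Finset.range (p + 1))
        (fun j => ((genFac 1 k (p + 1) * (p + 3 + k) : ℕ) : ℚ) *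
          ((-1 : ℚ) ^ j / (genFac 1 k (j + 1) : ℚ) *
            (ccN rk (p + 2 - j) (t (p + 2 - j)) j x.1 : ℚ)))]
      rw [Int.cast_sum]
      exact Finset.sum_congr rfl fun j _ => hF j.1 j.2
    refine ⟨(∑ j ∈ (Finset.range (p + 1)).attach, F j.1 j.2 : ℤ)
      + (-1) ^ (p + 1) * (ccN rk 1 (t 1) (p + 1) x.1 : ℤ), ?_⟩
    have hAB : ((genFac 1 k (p + 1) * (p + 3 + k) : ℕ) : ℚ) *
        ((-1 : ℚ) ^ (p + 1) / (genFac 1 k (p + 2) : ℚ)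
          + (-1 : ℚ) ^ (p + 2) / (genFac 1 k (p + 3) : ℚ)) = (-1 : ℚ) ^ (p + 1) := by
      have h := genFac_key k p
      rw [hpow]
      linear_combination ((-1 : ℚ)) ^ (p + 1) * h
    push_cast [mul_add] at hS hAB ⊢
    linear_combination hS + (ccN rk 1 (t 1) (p + 1) x.1 : ℚ) * hAB
  · -- lower bound
    rintro c ⟨hc0, hint⟩
    obtain ⟨m, hm⟩ := hint ⟨s (p + 2), hrks (p + 2)⟩
    rw [vVec_eq_sum_ccN, Finset.sum_range_succ, Finset.sum_range_succ] at hm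
    have e2 : p + 2 - (p + 2) = 0 := by omega
    have e1 : p + 2 - (p + 1) = 1 := by omega
    rw [e1, e2] at hm
    have hv1 : ccN rk 1 (t 1) (p + 1) (s (p + 2)) = 1 := by
      have hs' : s (p + 2) = s (1 + (p + 1)) := by congr 1; omega
      rw [hs', ccN_saturated rk hgrade s hschain hrks hcovs 1 (t 1) (p + 1), if_pos h1.symm]
    have hv0 : ccN rk 0 (t 0) (p + 2) (s (p + 2)) = 1 := by
      have hs' : s (p + 2) = s (0 + (p + 2)) := by congr 1; omega
      rw [hs', ccN_saturated rk hgrade s hschain hrks hcovs 0 (t 0) (p + 2), if_pos h0.symm]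
    have hs0 : ∑ j ∈ Finset.range (p + 1), ((-1 : ℚ) ^ j / (genFac 1 k (j + 1) : ℚ) *
        (ccN rk (p + 2 - j) (t (p + 2 - j)) j (s (p + 2)) : ℚ)) = 0 := by
      refine Finset.sum_eq_zero fun j hj => ?_
      have hj' : j ≤ p := by have := Finset.mem_range.mp hj; omega
      have hz : ccN rk (p + 2 - j) (t (p + 2 - j)) j (s (p + 2)) = 0 := by
        have hs' : s (p + 2) = s ((p + 2 - j) + j) := by congr 1; omega
        rw [hs', ccN_saturated rk hgrade s hschain hrks hcovs (p + 2 - j) (t (p + 2 - j)) j,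
          if_neg (fun h => hne (p + 2 - j) (by omega) h.symm)]
      rw [hz]
      simp
    rw [hs0, hv1, hv0] at hm
    simp only [show p + 1 + 1 = p + 2 from rfl, show p + 2 + 1 = p + 3 from rfl] at hm
    rw [h2n, h3n, hpow] at hm
    push_cast at hm
    have hq : (c : ℚ) = (-1 : ℚ) ^ (p + 1) * m *
        ((genFac 1 k (p + 1) : ℚ) * ((p : ℚ) + 3 + k)) := by
      field_simp at hm
      have hm2 : (c : ℚ) * (-1 : ℚ) ^ (p + 1) *
          ((genFac 1 k (p + 1) : ℚ) * ((p : ℚ) + 2 + k) * ((p : ℚ) + 2 + k))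
          = (m : ℚ) * ((genFac 1 k (p + 1) : ℚ) * ((p : ℚ) + 3 + k)) *
            ((genFac 1 k (p + 1) : ℚ) * ((p : ℚ) + 2 + k) * ((p : ℚ) + 2 + k)) := by
        linear_combination ((genFac 1 k (p + 1) : ℚ) * ((p : ℚ) + 2 + k)) * hm
      have hne0 : ((genFac 1 k (p + 1) : ℚ) * ((p : ℚ) + 2 + k) * ((p : ℚ) + 2 + k)) ≠ 0 := by
        exact mul_ne_zero (mul_ne_zero hGG hx2) hx2
      have hcq := mul_right_cancel₀ hne0 hm2
      linear_combination ((-1 : ℚ)) ^ (p + 1) * hcq - (c : ℚ) * hqsq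
    have hz2 : (c : ℤ) = (-1 : ℤ) ^ (p + 1) * m *
        ((genFac 1 k (p + 1) * (p + 3 + k) : ℕ) : ℤ) := by
      exact_mod_cast hq
    have hNposZ : (0 : ℤ) < ((genFac 1 k (p + 1) * (p + 3 + k) : ℕ) : ℤ) := by
      exact_mod_cast hNpos
    have hcposZ : (0 : ℤ) < (c : ℤ) := by exact_mod_cast hc0
    have hM1 : 1 ≤ (-1 : ℤ) ^ (p + 1) * m := by
      rcases lt_or_ge ((-1 : ℤ) ^ (p + 1) * m) 1 with h | h
      · exfalso
        have hM0 : (-1 : ℤ) ^ (p + 1) * m ≤ 0 := by omega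
        nlinarith
      · exact h
    have hfin : ((genFac 1 k (p + 1) * (p + 3 + k) : ℕ) : ℤ) ≤ (c : ℤ) := by nlinarith
    show genFac 1 k (p + 1) * (p + 3 + k) ≤ c
    exact_mod_cast hfin
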